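/- Define g₂ : [0, π) → ℝ by g₂(0) = 0 and g₂(x) = (cosh(x/2) + cos(x/2) - 2)/x² for x ≠ 0, so that g₂(x) = Σ_{k=0}^{∞} b_k x^{4k+2} with b_k = 1/(2^{4k+3}(4k+4)!). For n ∈ ℕ let T_{4n+2}(x) = Σ_{k=0}^{n} b_k x^{4k+2}, and for c ∈ (0, π) and m ∈ ℕ let 𝕋_{4m+6}(x) = Σ_{k=0}^{m} b_k x^{4k+2} + (g₂(c) - Σ_{k=0}^{m} b_k c^{4k+2})·(x/c)^{4m+6}, with 𝕋_2(x) = (g₂(c)/c²)·x². Then for every c ∈ (0, π), every x ∈ (0, c), and all m, n ∈ ℕ: x²/192 = T_2(x) ≤ T_{4n+2}(x) ≤ T_{4n+6}(x) ≤ g₂(x) ≤ 𝕋_{4m+6}(x) ≤ 𝕋_{4m+2}(x) ≤ 𝕋_2(x) = (g₂(c)/c²)·x². -/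

import Mathlib

open Real Set

noncomputable def g2 (x : ℝ) : ℝ :=
  if x = 0 then 0 else (Real.cosh (x / 2) + Real.cos (x / 2) - 2) / x ^ 2

/-- Maclaurin coefficients of `g₂`: `b_k = 1/(2^{4k+3}(4k+4)!)`. -/
noncomputable def bcoef (k : ℕ) : ℝ := 1 / (2 ^ (4 * k + 3) * (Nat.factorial (4 * k + 4) : ℝ))

/-- First Taylor approximation `T_{4n+2}(x) = Σ_{k=0}^n b_k x^{4k+2}`. -/
noncomputable def T (n : ℕ) (x : ℝ) : ℝ := ∑ k ∈ Finset.range (n + 1), bcoef k * x ^ (4 * k + 2)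

/-- Second Taylor approximation `𝕋_{4m+2}(x) = Σ_{k=0}^{m-1} b_k x^{4k+2} +
(g₂(c) - Σ_{k=0}^{m-1} b_k c^{4k+2})·(x/c)^{4m+2}`, with `𝕋_2(x) = (g₂(c)/c²)·x²`
(the formula specializes to this at `m = 0`); `𝕋_{4m+6}` is `TT c (m+1)`. -/
noncomputable def TT (c : ℝ) (m : ℕ) (x : ℝ) : ℝ :=
  (∑ k ∈ Finset.range m, bcoef k * x ^ (4 * k + 2)) +
    (g2 c - ∑ k ∈ Finset.range m, bcoef k * c ^ (4 * k + 2)) * (x / c) ^ (4 * m + 2)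

lemma bcoef_pos (k : ℕ) : 0 < bcoef k := by
  unfold bcoef
  positivity

lemma hasSum_g2 {x : ℝ} (hx : x ≠ 0) :
    HasSum (fun k : ℕ => bcoef k * x ^ (4 * k + 2)) (g2 x) := by
  have h1 := (Real.hasSum_cosh (x / 2)).add (Real.hasSum_cos (x / 2))
  -- restrict to even indices
  have hinj : Function.Injective (fun m : ℕ => 2 * m) := fun a b h => by simp only at h; omega
  have hsupp : ∀ n ∉ Set.range (fun m : ℕ => 2 * m),
      ((x / 2) ^ (2 * n) / (Nat.factorial (2 * n) : ℝ) + (-1) ^ n * (x / 2) ^ (2 * n) / (Nat.factorial (2 * n) : ℝ)) = 0 := by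
    intro n hn
    have hodd : Odd n := by
      rcases Nat.even_or_odd n with ⟨r, hr⟩ | ho
      · exact absurd ⟨r, show 2 * r = n by omega⟩ hn
      · exact ho
    rw [hodd.neg_one_pow]
    ring
  have h2 : HasSum (fun m : ℕ => 2 * (x / 2) ^ (4 * m) / (Nat.factorial (4 * m) : ℝ))
      (Real.cosh (x / 2) + Real.cos (x / 2)) := by
    have h := (hinj.hasSum_iff hsupp).mpr h1
    convert h using 1
    funext m
    simp only [Function.comp_apply]
    have h4 : 2 * (2 * m) = 4 * m := by ring
    rw [h4, pow_mul]
    norm_num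
    ring
  have h3 : HasSum (fun m : ℕ => 2 * (x / 2) ^ (4 * (m + 1)) / (Nat.factorial (4 * (m + 1)) : ℝ))
      (Real.cosh (x / 2) + Real.cos (x / 2) - 2) := by
    refine (hasSum_nat_add_iff
      (f := fun m => 2 * (x / 2) ^ (4 * m) / (Nat.factorial (4 * m) : ℝ)) 1).mpr ?_
    convert h2 using 1
    rfl
    simp [Nat.factorial]
  have h5 := h3.div_const (x ^ 2)
  have hkey : ∀ m : ℕ, 2 * (x / 2) ^ (4 * (m + 1)) / (Nat.factorial (4 * (m + 1)) : ℝ) / x ^ 2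
      = bcoef m * x ^ (4 * m + 2) := by
    intro m
    have he : 4 * (m + 1) = 4 * m + 4 := by ring
    rw [he, bcoef]
    have hfac : (Nat.factorial (4 * m + 4) : ℝ) ≠ 0 := by positivity
    rw [div_pow]
    field_simp
    ring
  have h6 : HasSum (fun m : ℕ => bcoef m * x ^ (4 * m + 2))
      ((Real.cosh (x / 2) + Real.cos (x / 2) - 2) / x ^ 2) := by
    convert h5 using 2 with m
    rfl
    exact (hkey m).symm
  simpa [g2, hx] using h6

lemma tail_hasSum {x : ℝ} (hx : x ≠ 0) (m : ℕ) :
    HasSum (fun k : ℕ => bcoef (k + m) * x ^ (4 * (k + m) + 2))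
      (g2 x - ∑ k ∈ Finset.range m, bcoef k * x ^ (4 * k + 2)) := by
  refine (hasSum_nat_add_iff (f := fun k => bcoef k * x ^ (4 * k + 2)) m).mpr ?_
  rw [sub_add_cancel]
  exact hasSum_g2 hx

lemma tail_nonneg {x : ℝ} (hx : 0 < x) (m : ℕ) :
    0 ≤ g2 x - ∑ k ∈ Finset.range m, bcoef k * x ^ (4 * k + 2) :=
  hasSum_le (fun k => mul_nonneg (bcoef_pos _).le (by positivity)) hasSum_zero
    (tail_hasSum hx.ne' m)

lemma TT_succ_le {c x : ℝ} (hc : 0 < c) (hx0 : 0 < x) (hxc : x < c) (m : ℕ) :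
    TT c (m + 1) x ≤ TT c m x := by
  have hR := tail_nonneg hc (m + 1)
  set R := g2 c - ∑ k ∈ Finset.range (m + 1), bcoef k * c ^ (4 * k + 2) with hRdef
  have hu0 : 0 < x / c := div_pos hx0 hc
  have hu1 : x / c < 1 := (div_lt_one hc).mpr hxc
  have hxe : x ^ (4 * m + 2) = c ^ (4 * m + 2) * (x / c) ^ (4 * m + 2) := by
    rw [div_pow]
    field_simp
  have heq : TT c m x - TT c (m + 1) x
      = R * ((x / c) ^ (4 * m + 2) - (x / c) ^ (4 * (m + 1) + 2)) := by
    unfold TT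
    rw [Finset.sum_range_succ, Finset.sum_range_succ, hRdef, Finset.sum_range_succ, hxe]
    ring
  have hpow : (x / c) ^ (4 * (m + 1) + 2) ≤ (x / c) ^ (4 * m + 2) :=
    pow_le_pow_of_le_one hu0.le hu1.le (by omega)
  nlinarith [mul_nonneg hR (sub_nonneg.mpr hpow)]

theorem g2_double_sided_taylor (c : ℝ) (hc : c ∈ Ioo 0 π)
    (x : ℝ) (hx : x ∈ Ioo 0 c) (m n : ℕ) :
    x ^ 2 / 192 = T 0 x ∧
    T 0 x ≤ T n x ∧
    T n x ≤ T (n + 1) x ∧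
    T (n + 1) x ≤ g2 x ∧
    g2 x ≤ TT c (m + 1) x ∧
    TT c (m + 1) x ≤ TT c m x ∧
    TT c m x ≤ TT c 0 x ∧
    TT c 0 x = (g2 c / c ^ 2) * x ^ 2 := by
  obtain ⟨hc0, -⟩ := hc
  obtain ⟨hx0, hxc⟩ := hx
  have hxne : x ≠ 0 := hx0.ne'
  have hcne : c ≠ 0 := hc0.ne'
  have hsum := hasSum_g2 hxne
  have hT_mono : ∀ a b : ℕ, a ≤ b → T a x ≤ T b x := by
    intro a b hab
    unfold T
    apply Finset.sum_le_sum_of_subset_of_nonneg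
    · exact Finset.range_subset_range.mpr (by omega)
    · intro i _ _
      exact mul_nonneg (bcoef_pos i).le (by positivity)
  have hTT_mono : ∀ a b : ℕ, a ≤ b → TT c b x ≤ TT c a x := by
    intro a b hab
    induction b with
    | zero => simp_all
    | succ b ih =>
      rcases Nat.eq_or_lt_of_le hab with h | h
      · subst h; rfl
      · exact (TT_succ_le hc0 hx0 hxc b).trans (ih (by omega))
  refine ⟨?_, hT_mono 0 n (Nat.zero_le n), hT_mono n (n + 1) (by omega), ?_, ?_, ?_, ?_, ?_⟩
  · unfold T bcoef
    simp [Nat.factorial]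
    norm_num
    ring
  · -- partial sum ≤ g2 x
    exact sum_le_hasSum _ (fun i _ => mul_nonneg (bcoef_pos i).le (by positivity)) hsum
  · -- g2 x ≤ TT c (m+1) x
    have htx := tail_hasSum hxne (m + 1)
    have htc := (tail_hasSum hcne (m + 1)).mul_right ((x / c) ^ (4 * (m + 1) + 2))
    have hbound : ∀ k : ℕ, bcoef (k + (m + 1)) * x ^ (4 * (k + (m + 1)) + 2)
        ≤ bcoef (k + (m + 1)) * c ^ (4 * (k + (m + 1)) + 2) * (x / c) ^ (4 * (m + 1) + 2) := by
      intro k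
      have h1 : x ^ (4 * (k + (m + 1)) + 2)
          = c ^ (4 * (k + (m + 1)) + 2) * (x / c) ^ (4 * (k + (m + 1)) + 2) := by
        rw [div_pow]; field_simp
      have hpow : (x / c) ^ (4 * (k + (m + 1)) + 2) ≤ (x / c) ^ (4 * (m + 1) + 2) :=
        pow_le_pow_of_le_one (by positivity) ((div_lt_one hc0).mpr hxc).le (by omega)
      have hcp : (0:ℝ) ≤ c ^ (4 * (k + (m + 1)) + 2) := by positivity
      calc bcoef (k + (m + 1)) * x ^ (4 * (k + (m + 1)) + 2)
          = bcoef (k + (m + 1)) * c ^ (4 * (k + (m + 1)) + 2)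
            * (x / c) ^ (4 * (k + (m + 1)) + 2) := by rw [h1]; ring
        _ ≤ _ := mul_le_mul_of_nonneg_left hpow
            (mul_nonneg (bcoef_pos _).le hcp)
    have hle := hasSum_le hbound htx htc
    unfold TT
    linarith
  · exact TT_succ_le hc0 hx0 hxc m
  · exact hTT_mono 0 m (Nat.zero_le m)
  · unfold TT
    rw [div_pow]
    field_simp
    simp
    ring
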